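/- Consider a graph H consisting of 2h+1 copies G₀, G₁^f, …, G_h^f, G₁^b, …, G_h^b of the nonnegative part of G, where each original negative edge (u,v) of weight w induces edges of weight w + M ≥ 0 going from layer G₀/G_i^f to the next forward layer, and from layer G_{i+1}^b to G_i^b and G₁^b to G₀, plus for certain vertices x an edge from x_h^f to x_h^b of weight −2hM. Then every cycle in H corresponds to a closed walk in G of the same total weight; hence a negative cycle in H implies a negative cycle in G. -/

import Mathlib

open scoped Classical

/-- The weight of a walk (given as a list of vertices) under edge weights `w`. -/
noncomputable def pathWeight {W : Type*} (w : W → W → ℝ) : List W → ℝ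
  | [] => 0
  | [_] => 0
  | u :: v :: rest => w u v + pathWeight w (v :: rest)

/-- Edges of the layered graph `H` built from `G = (E, w)` with hop bound `h`
and sampled set `S`.  A vertex `(v, i)` is the copy of `v` in layer `i`, where
layer `0` is `G₀`, layers `1,…,h` are `G₁^f,…,G_h^f`, and layers
`h+1,…,2h` are `G_h^b,…,G_1^b`.  Nonnegative edges stay inside a layer;
each negative edge of `G` induces edges to the next layer (cyclically,
with `G_1^b → G₀` realized as layer `2h → 0`); and each sampled `x ∈ S` has a
shortcut edge from `x_h^f` (layer `h`) to `x_h^b` (layer `h+1`). -/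
def EH {V : Type*} (E : V → V → Prop) (w : V → V → ℝ) (h : ℕ) (S : Set V) :
    V × ℕ → V × ℕ → Prop := fun a b =>
  (a.2 = b.2 ∧ a.2 ≤ 2 * h ∧ E a.1 b.1 ∧ 0 ≤ w a.1 b.1) ∨
  (E a.1 b.1 ∧ w a.1 b.1 < 0 ∧ a.2 + 1 = b.2 ∧ b.2 ≤ 2 * h ∧ a.2 ≠ h) ∨
  (E a.1 b.1 ∧ w a.1 b.1 < 0 ∧ a.2 = 2 * h ∧ b.2 = 0) ∨
  (a.1 = b.1 ∧ a.1 ∈ S ∧ a.2 = h ∧ b.2 = h + 1)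

/-- Weights of the layered graph `H`: intra-layer edges keep their weight,
inter-layer copies of negative edges get weight `w + M ≥ 0`, and the shortcut
edges `x_h^f → x_h^b` have weight `−2hM`. -/
noncomputable def wH {V : Type*} (w : V → V → ℝ) (h : ℕ) (M : ℝ) :
    V × ℕ → V × ℕ → ℝ := fun a b =>
  if a.2 = b.2 then w a.1 b.1
  else if a.1 = b.1 ∧ a.2 = h ∧ b.2 = h + 1 then -(2 * (h : ℝ)) * M
  else w a.1 b.1 + M

/-- Layer potential used to compare weights in `G` and in `H`. -/
noncomputable def phiL (h : ℕ) (M : ℝ) (i : ℕ) : ℝ :=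
  if i ≤ h then (i : ℝ) * M else ((i : ℝ) - 2 * h - 1) * M

/-- Collapse a walk of `H` to a walk of `G` by deleting shortcut steps. -/
noncomputable def collapse {V : Type*} (h : ℕ) : List (V × ℕ) → List V
  | [] => []
  | [a] => [a.1]
  | a :: b :: rest =>
    if a.1 = b.1 ∧ a.2 = h ∧ b.2 = h + 1 then collapse h (b :: rest)
    else a.1 :: collapse h (b :: rest)

lemma collapse_cons_eq {V : Type*} (h : ℕ) :
    ∀ (a : V × ℕ) (rest : List (V × ℕ)),
      ∃ l, collapse h (a :: rest) = a.1 :: l := by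
  intro a rest
  induction rest generalizing a with
  | nil => exact ⟨[], rfl⟩
  | cons b rest ih =>
    obtain ⟨l, hl⟩ := ih b
    by_cases hs : a.1 = b.1 ∧ a.2 = h ∧ b.2 = h + 1
    · refine ⟨l, ?_⟩
      have heq : collapse h (a :: b :: rest) = collapse h (b :: rest) := by
        simp only [collapse, if_pos hs]
      rw [heq, hl, hs.1]
    · exact ⟨collapse h (b :: rest), by simp only [collapse, if_neg hs]⟩

lemma collapse_getLast {V : Type*} (h : ℕ) :
    ∀ (c : List (V × ℕ)), (collapse h c).getLast? = c.getLast?.map Prod.fst := by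
  intro c
  induction c with
  | nil => rfl
  | cons a rest ih =>
    cases rest with
    | nil => rfl
    | cons b rest =>
      by_cases hs : a.1 = b.1 ∧ a.2 = h ∧ b.2 = h + 1
      · simp only [collapse, if_pos hs]
        rw [ih, List.getLast?_cons_cons]
      · obtain ⟨l, hl⟩ := collapse_cons_eq h b rest
        simp only [collapse, if_neg hs]
        rw [hl, List.getLast?_cons_cons, ← hl, ih, List.getLast?_cons_cons]

lemma collapse_chain {V : Type*} (E : V → V → Prop) (w : V → V → ℝ) (h : ℕ)
    (S : Set V) :
    ∀ (c : List (V × ℕ)), List.Chain' (EH E w h S) c →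
      List.Chain' E (collapse h c) := by
  intro c
  induction c with
  | nil => intro _; simp [collapse, List.Chain']
  | cons a rest ih =>
    cases rest with
    | nil => intro _; simp [collapse, List.Chain']
    | cons b rest =>
      intro hc
      simp only [List.Chain', List.isChain_cons_cons] at hc
      obtain ⟨hab, hc⟩ := hc
      by_cases hs : a.1 = b.1 ∧ a.2 = h ∧ b.2 = h + 1
      · simpa only [collapse, if_pos hs] using ih hc
      · obtain ⟨l, hl⟩ := collapse_cons_eq h b rest
        simp only [collapse, if_neg hs, hl, List.Chain', List.isChain_cons_cons]
        refine ⟨?_, by rw [← hl]; exact ih hc⟩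
        rcases hab with h1 | h2 | h3 | h4
        · exact h1.2.2.1
        · exact h2.1
        · exact h3.1
        · exact absurd ⟨h4.1, h4.2.2⟩ hs

lemma phiL_step (h : ℕ) (M : ℝ) (i : ℕ) (hi : i ≠ h) (hi2 : i + 1 ≤ 2 * h) :
    phiL h M (i + 1) - phiL h M i = M := by
  unfold phiL
  rcases lt_or_gt_of_ne hi with hlt | hgt
  · rw [if_pos (by omega : i ≤ h), if_pos (by omega : i + 1 ≤ h)]
    push_cast
    ring
  · rw [if_neg (by omega : ¬ i ≤ h), if_neg (by omega : ¬ i + 1 ≤ h)]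
    push_cast
    ring

lemma collapse_weight {V : Type*} (E : V → V → Prop) (w : V → V → ℝ) (h : ℕ)
    (hh : 1 ≤ h) (M : ℝ) (S : Set V) :
    ∀ (rest : List (V × ℕ)) (a : V × ℕ),
      List.Chain' (EH E w h S) (a :: rest) →
      pathWeight w (collapse h (a :: rest)) =
        pathWeight (wH w h M) (a :: rest) + phiL h M a.2 -
          phiL h M (((a :: rest).getLast (by simp)).2) := by
  intro rest
  induction rest with
  | nil => intro a _; simp [collapse, pathWeight]
  | cons b rest ih =>
    intro a hc
    simp only [List.Chain', List.isChain_cons_cons] at hc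
    obtain ⟨hab, hc⟩ := hc
    have hlast : ((a :: b :: rest).getLast (by simp)) =
        ((b :: rest).getLast (by simp)) := by
      rw [List.getLast_cons]
    by_cases hs : a.1 = b.1 ∧ a.2 = h ∧ b.2 = h + 1
    · have hwab : wH w h M a b = -(2 * (h : ℝ)) * M := by
        have hne : ¬ a.2 = b.2 := by rw [hs.2.1, hs.2.2]; omega
        unfold wH
        rw [if_neg hne, if_pos hs]
      have hphi : phiL h M b.2 = phiL h M a.2 + -(2 * (h : ℝ)) * M := by
        rw [hs.2.1, hs.2.2]
        unfold phiL
        rw [if_pos (le_refl h), if_neg (by omega : ¬ h + 1 ≤ h)]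
        push_cast
        ring
      simp only [collapse, if_pos hs]
      rw [ih b hc, hlast]
      rw [show pathWeight (wH w h M) (a :: b :: rest) =
          wH w h M a b + pathWeight (wH w h M) (b :: rest) from rfl]
      rw [hwab, hphi]
      ring
    · obtain ⟨l, hl⟩ := collapse_cons_eq h b rest
      have hstep : phiL h M b.2 - phiL h M a.2 = wH w h M a b - w a.1 b.1 := by
        rcases hab with h1 | h2 | h3 | h4
        · rw [h1.1]
          unfold wH
          rw [if_pos h1.1]
          ring
        · have : wH w h M a b = w a.1 b.1 + M := by
            unfold wH
            rw [if_neg (by omega : ¬ a.2 = b.2), if_neg]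
            intro hcon
            exact h2.2.2.2.2 hcon.2.1
          rw [this, ← h2.2.2.1, phiL_step h M a.2 h2.2.2.2.2 (h2.2.2.1 ▸ h2.2.2.2.1)]
          ring
        · have : wH w h M a b = w a.1 b.1 + M := by
            unfold wH
            rw [if_neg (by omega : ¬ a.2 = b.2), if_neg]
            intro hcon
            omega
          rw [this, h3.2.2.1, h3.2.2.2]
          unfold phiL
          rw [if_pos (by omega : 0 ≤ h), if_neg (by omega : ¬ 2 * h ≤ h)]
          push_cast
          ring
        · exact absurd ⟨h4.1, h4.2.2⟩ hs
      simp only [collapse, if_neg hs, hl]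
      rw [show pathWeight w (a.1 :: b.1 :: l) =
          w a.1 b.1 + pathWeight w (b.1 :: l) from rfl]
      rw [← hl, ih b hc, hlast]
      rw [show pathWeight (wH w h M) (a :: b :: rest) =
          wH w h M a b + pathWeight (wH w h M) (b :: rest) from rfl]
      have := hstep
      ring_nf
      linarith [hstep]

/-- Every cycle (closed walk) of the layered graph `H` corresponds to a closed
walk of `G` of the same total weight; hence a negative cycle in `H` yields a
negative cycle (closed walk) in `G`. -/
theorem layered_cycle_correspondence {V : Type*}
    (E : V → V → Prop) (w : V → V → ℝ) (h : ℕ) (hh : 1 ≤ h)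
    (M : ℝ) (hM : ∀ u v, E u v → |w u v| < M) (S : Set V) :
    ∀ c : List (V × ℕ), 2 ≤ c.length → List.Chain' (EH E w h S) c →
      c.head? = c.getLast? →
      ∃ g : List V, 2 ≤ g.length ∧ List.Chain' E g ∧ g.head? = g.getLast? ∧
        pathWeight w g = pathWeight (wH w h M) c := by
  intro c hlen hchain hclosed
  match c, hlen with
  | a :: b :: rest, _ =>
    refine ⟨collapse h (a :: b :: rest), ?_, collapse_chain E w h S _ hchain, ?_, ?_⟩
    · -- length ≥ 2
      by_cases hs : a.1 = b.1 ∧ a.2 = h ∧ b.2 = h + 1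
      · cases rest with
        | nil =>
          exfalso
          simp only [List.head?_cons, List.getLast?_cons_cons, List.getLast?_cons,
            List.getLast_singleton] at hclosed
          have hab : a = b := by
            simpa using hclosed
          have hab2 : a.2 = b.2 := by rw [hab]
          rw [hs.2.1, hs.2.2] at hab2
          omega
        | cons d rest' =>
          by_cases hs2 : b.1 = d.1 ∧ b.2 = h ∧ d.2 = h + 1
          · exfalso
            have := hs.2.2
            have := hs2.2.1
            omega
          · obtain ⟨l, hl⟩ := collapse_cons_eq h d rest'
            simp only [collapse, if_pos hs, if_neg hs2, hl, List.length_cons]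
            omega
      · obtain ⟨l, hl⟩ := collapse_cons_eq h b rest
        simp only [collapse, if_neg hs, hl, List.length_cons]
        omega
    · -- closed
      obtain ⟨l, hl⟩ := collapse_cons_eq h a (b :: rest)
      have h1 : (collapse h (a :: b :: rest)).head? = some a.1 := by rw [hl]; rfl
      have h2 : (collapse h (a :: b :: rest)).getLast? = some a.1 := by
        rw [collapse_getLast, ← hclosed]; rfl
      rw [h1, h2]
    · -- weight
      have hfl : (a :: b :: rest).getLast (by simp) = a := by
        have : (a :: b :: rest).getLast? = some ((a :: b :: rest).getLast (by simp)) :=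
          List.getLast?_eq_getLast (by simp)
        rw [this] at hclosed
        exact (Option.some_injective _ hclosed.symm)
      rw [collapse_weight E w h hh M S (b :: rest) a hchain, hfl]
      ring
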